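/- arXiv:2004.02629 — 2 statements merged into one kernel-verified Lean document; each statement's English description precedes it below -/
import Mathlib

section
/- For n ≥ 3 candidates indexed by i ∈ {0,1,…,n−1} and n voters with preference relations ≻_k defined by i ≻_k j iff (i − k) mod n < (j − k) mod n, define the majority relation M by: i M j iff the number of voters k with i ≻_k j is strictly greater than n/2. Then M is not transitive, even though every individual relation ≻_k is transitive. -/
/-- Voter `k`'s preference relation in the generalized Condorcet paradox:
`i ≻ₖ j` iff `(i - k) mod n < (j - k) mod n` (subtraction in `Fin n` is mod `n`). -/
def condorcetPref (n : ℕ) (k i j : Fin n) : Prop := i - k < j - k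

instance (n : ℕ) (k i j : Fin n) : Decidable (condorcetPref n k i j) := by
  unfold condorcetPref; infer_instance

/-- The majority relation: `i M j` iff strictly more than `n / 2` of the `n` voters
prefer `i` to `j`. -/
def condorcetMaj (n : ℕ) (i j : Fin n) : Prop :=
  ((Finset.univ.filter (fun k : Fin n => condorcetPref n k i j)).card : ℝ) > n / 2

lemma fin_lt_add_one_iff (m : ℕ) (d : Fin (m + 1)) : d < d + 1 ↔ d + 1 ≠ 0 := by
  rcases eq_or_ne d (Fin.last m) with h | h
  · subst h
    simp [Fin.last_add_one]
  · have hlt : d < Fin.last m := Fin.lt_last_iff_ne_last.mpr h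
    have hv := Fin.val_add_one_of_lt hlt
    constructor
    · intro _ he
      have : (d + 1).val = 0 := by rw [he]; rfl
      omega
    · intro _
      rw [Fin.lt_def, hv]
      omega

lemma condorcet_pref_succ_iff (m : ℕ) (k i : Fin (m + 1)) :
    condorcetPref (m + 1) k i (i + 1) ↔ k ≠ i + 1 := by
  have h : i + 1 - k = (i - k) + 1 := by abel
  unfold condorcetPref
  rw [h, fin_lt_add_one_iff m (i - k)]
  constructor
  · intro hne he
    exact hne (by rw [he]; abel)
  · intro hne he
    apply hne
    have h2 : i + 1 - k = 0 := by rw [h, he]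
    exact (sub_eq_zero.mp h2).symm

lemma condorcet_maj_succ (m : ℕ) (hm : 3 ≤ m + 1) (i : Fin (m + 1)) :
    condorcetMaj (m + 1) i (i + 1) := by
  unfold condorcetMaj
  have hfe : (Finset.univ.filter (fun k : Fin (m + 1) => condorcetPref (m + 1) k i (i + 1)))
      = Finset.univ.erase (i + 1) := by
    ext k
    simp [condorcet_pref_succ_iff m k i]
  rw [hfe, Finset.card_erase_of_mem (Finset.mem_univ _), Finset.card_univ, Fintype.card_fin]
  have : ((m + 1 - 1 : ℕ) : ℝ) = (m + 1 : ℝ) - 1 := by push_cast; ring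
  rw [this]
  have hm' : (3 : ℝ) ≤ (m : ℝ) + 1 := by exact_mod_cast hm
  push_cast
  linarith

/-- Every individual preference relation is transitive, yet the majority relation
is not transitive (Condorcet's paradox, generalized). -/
theorem condorcetMaj_not_transitive (n : ℕ) (hn : 3 ≤ n) :
    (∀ k : Fin n, Transitive (condorcetPref n k)) ∧
    ¬ Transitive (condorcetMaj n) := by
  constructor
  · intro k a b c
    unfold condorcetPref
    exact lt_trans
  · intro htrans
    obtain ⟨m, rfl⟩ : ∃ m, n = m + 1 := ⟨n - 1, by omega⟩
    -- the chain: 0 M 1 M 2 M ... M last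
    have key : ∀ j : ℕ, (hj : j < m + 1) → 0 < j →
        condorcetMaj (m + 1) 0 ⟨j, hj⟩ := by
      intro j
      induction j with
      | zero => intro _ h; omega
      | succ p ih =>
        intro hj _
        have hp : p < m + 1 := by omega
        have hstep : (⟨p, hp⟩ : Fin (m + 1)) + 1 = ⟨p + 1, hj⟩ := by
          apply Fin.ext
          simp [Fin.add_def, Fin.val_one']
          omega
        have hmaj := condorcet_maj_succ m hn ⟨p, hp⟩
        rw [hstep] at hmaj
        rcases Nat.eq_zero_or_pos p with hp0 | hp0
        · subst hp0
          have h0 : (0 : Fin (m + 1)) = ⟨0, hp⟩ := rfl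
          rw [h0]
          exact hmaj
        · exact htrans (ih hp hp0) hmaj
    have hlast : condorcetMaj (m + 1) 0 (Fin.last m) := by
      have : (Fin.last m) = ⟨m, by omega⟩ := rfl
      rw [this]
      exact key m (by omega) (by omega)
    have hwrap : condorcetMaj (m + 1) (Fin.last m) 0 := by
      have := condorcet_maj_succ m hn (Fin.last m)
      rwa [Fin.last_add_one] at this
    have h00 : condorcetMaj (m + 1) 0 0 := htrans hlast hwrap
    unfold condorcetMaj at h00
    have hempty : (Finset.univ.filter
        (fun k : Fin (m + 1) => condorcetPref (m + 1) k 0 0)) = ∅ := by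
      ext k
      simp [condorcetPref]
    rw [hempty] at h00
    simp at h00
    have : (0 : ℝ) < ((m : ℝ) + 1) / 2 := by positivity
    linarith
end

section
/- For n ≥ 3 candidates indexed by i ∈ {0,1,…,n−1} and n voters with preference relations ≻_k defined by i ≻_k j iff (i − k) mod n < (j − k) mod n, define the majority relation M by: i M j iff the number of voters k with i ≻_k j is strictly greater than n/2. Then M has no maximal element: for every candidate i there exists a candidate j with j M i (namely j = (i−1) mod n). In particular, no candidate is majority-preferred to all others. -/
lemma condorcet_sub_one_lt {n : ℕ} [NeZero n] (a : Fin n) (ha : a ≠ 0) : a - 1 < a := by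
  obtain ⟨m, rfl⟩ := Nat.exists_eq_succ_of_ne_zero (NeZero.ne n)
  exact Fin.sub_one_lt_iff.mpr (Fin.pos_of_ne_zero ha)

lemma condorcet_filter_pred (n : ℕ) (hn : 3 ≤ n) [NeZero n] (i : Fin n) :
    (Finset.univ.filter (fun k : Fin n => condorcetPref n k (i - 1) i)) = {i}ᶜ := by
  ext k
  simp only [Finset.mem_filter, Finset.mem_univ, true_and, Finset.mem_compl,
    Finset.mem_singleton]
  unfold condorcetPref
  constructor
  · intro h hk
    rw [hk] at h
    have heq : i - 1 - i = -1 := by abel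
    rw [heq, sub_self] at h
    exact absurd h (by simp [Fin.lt_iff_val_lt_val])
  · intro hk
    have hne : i - k ≠ 0 := fun h => hk (by
      have := sub_eq_zero.mp h; exact this.symm)
    have : i - 1 - k = i - k - 1 := by abel
    rw [this]
    exact condorcet_sub_one_lt _ hne

/-- The majority relation has no maximal element: every candidate `i` is majority-dominated
by some candidate `j`, namely `j = (i - 1) mod n`.  In particular no candidate is
majority-preferred to all others. -/
theorem condorcetMaj_no_maximal (n : ℕ) (hn : 3 ≤ n) [NeZero n] :
    (∀ i : Fin n, ∃ j : Fin n, j = i - 1 ∧ condorcetMaj n j i) ∧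
    ¬ ∃ i : Fin n, ∀ j : Fin n, j ≠ i → condorcetMaj n i j := by
  have hmaj : ∀ i : Fin n, condorcetMaj n (i - 1) i := by
    intro i
    unfold condorcetMaj
    rw [condorcet_filter_pred n hn i]
    have : ({i}ᶜ : Finset (Fin n)).card = n - 1 := by
      rw [Finset.card_compl]; simp
    rw [this]
    have h1 : (1 : ℕ) ≤ n := by omega
    rw [Nat.cast_sub h1]
    push_cast
    have : (3 : ℝ) ≤ n := by exact_mod_cast hn
    linarith
  refine ⟨fun i => ⟨i - 1, rfl, hmaj i⟩, ?_⟩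
  rintro ⟨i, hi⟩
  have hne : i - 1 ≠ i := by
    intro h
    have h1 : (1 : Fin n) = 0 := sub_eq_self.mp h
    rw [Fin.one_eq_zero_iff] at h1
    omega
  have h1 : condorcetMaj n i (i - 1) := hi (i - 1) hne
  have h2 : condorcetMaj n (i - 1) i := hmaj i
  -- the two filters are disjoint subsets of univ
  have hdisj : Disjoint (Finset.univ.filter (fun k : Fin n => condorcetPref n k i (i - 1)))
      (Finset.univ.filter (fun k : Fin n => condorcetPref n k (i - 1) i)) := by
    rw [Finset.disjoint_filter]
    intro k _ hk hk'
    exact absurd (lt_trans hk hk') (lt_irrefl _)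
  have hcard : (Finset.univ.filter (fun k : Fin n => condorcetPref n k i (i - 1))).card +
      (Finset.univ.filter (fun k : Fin n => condorcetPref n k (i - 1) i)).card ≤ n := by
    rw [← Finset.card_union_of_disjoint hdisj]
    have := Finset.card_le_univ ((Finset.univ.filter (fun k : Fin n => condorcetPref n k i (i - 1))) ∪ (Finset.univ.filter (fun k : Fin n => condorcetPref n k (i - 1) i)))
    simpa using this
  unfold condorcetMaj at h1 h2
  have : ((n : ℝ)) < n := by
    calc (n : ℝ) = n / 2 + n / 2 := by ring
    _ < _ + _ := add_lt_add h1 h2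
    _ ≤ n := by exact_mod_cast hcard
  exact absurd this (lt_irrefl _)
end
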